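/- If the network weights in each layer are initialized i.i.d. from a symmetric Bernoulli distribution over {-σ, +σ}, then for any two distinct paths p₁ ≠ p₂, the expected inner product of the NPV gradients vanishes: E[⟨φ_{p₁}, φ_{p₂}⟩] = 0, where φ_p = (∂_θ v_Θ(p), θ ∈ Θ). -/

import Mathlib

open MeasureTheory ProbabilityTheory

/-- For weights i.i.d. symmetric Bernoulli over {−σ, +σ} and distinct paths p₁ ≠ p₂,
the expected inner product of the NPV gradients vanishes:
E[⟨φ_{p₁}, φ_{p₂}⟩] = 0.  Weights are indexed by (layer, within-layer index) ∈ Fin d × W;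
a path is the choice `p l` of the weight it uses in each layer `l`, and
∂_{(l,j)} v(p) = 1_{p l = j} · ∏_{l' ≠ l} Θ(l', p l'). -/
theorem expected_npv_gradient_inner_product_zero
    {Ω : Type*} [MeasurableSpace Ω] (μ : Measure Ω) [IsProbabilityMeasure μ]
    (d : ℕ) (W : Type*) [Fintype W] [DecidableEq W]
    (σ : ℝ) (hσ : 0 < σ)
    (Θ : Fin d × W → Ω → ℝ)
    (hmeas : ∀ lj, Measurable (Θ lj))
    (hval : ∀ lj ω, Θ lj ω = σ ∨ Θ lj ω = -σ)
    (hmean : ∀ lj, ∫ ω, Θ lj ω ∂μ = 0)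
    (hindep : iIndepFun Θ μ)
    (p₁ p₂ : Fin d → W) (hne : p₁ ≠ p₂) :
    ∫ ω, ∑ l : Fin d, ∑ j : W,
        (if p₁ l = j then ∏ l' ∈ Finset.univ.erase l, Θ (l', p₁ l') ω else 0) *
        (if p₂ l = j then ∏ l' ∈ Finset.univ.erase l, Θ (l', p₂ l') ω else 0) ∂μ = 0 := by
  classical
  obtain ⟨l₀, hl₀⟩ : ∃ l, p₁ l ≠ p₂ l := Function.ne_iff.mp hne
  have habs : ∀ lj ω, |Θ lj ω| = σ := by
    intro lj ω
    rcases hval lj ω with h | h <;> rw [h] <;>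
      simp [abs_of_pos hσ]
  have hprodabs : ∀ (s : Finset (Fin d × W)) (ω : Ω),
      |∏ t ∈ s, Θ t ω| = σ ^ s.card := by
    intro s ω
    rw [Finset.abs_prod]
    simp [habs, Finset.prod_const]
  have hprodmeas : ∀ (s : Finset (Fin d × W)),
      Measurable (fun ω => ∏ t ∈ s, Θ t ω) :=
    fun s => Finset.measurable_prod s (fun t _ => hmeas t)
  have hprodint : ∀ (s : Finset (Fin d × W)),
      Integrable (fun ω => ∏ t ∈ s, Θ t ω) μ := by
    intro s
    refine Integrable.mono' (integrable_const (σ ^ s.card))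
      (hprodmeas s).aestronglyMeasurable ?_
    filter_upwards with ω
    rw [Real.norm_eq_abs, hprodabs]
  have hΘint : ∀ lj, Integrable (Θ lj) μ := by
    intro lj
    refine Integrable.mono' (integrable_const σ) (hmeas lj).aestronglyMeasurable ?_
    filter_upwards with ω
    rw [Real.norm_eq_abs, habs]
  -- integrability of each summand
  have hint : ∀ (l : Fin d) (j : W), Integrable (fun ω =>
      (if p₁ l = j then ∏ l' ∈ Finset.univ.erase l, Θ (l', p₁ l') ω else 0) *
      (if p₂ l = j then ∏ l' ∈ Finset.univ.erase l, Θ (l', p₂ l') ω else 0)) μ := by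
    intro l j
    by_cases h₁ : p₁ l = j
    · by_cases h₂ : p₂ l = j
      · simp only [if_pos h₁, if_pos h₂]
        set U := Finset.univ.erase l with hU
        refine Integrable.mono' (integrable_const (σ ^ U.card * σ ^ U.card))
          ((Finset.measurable_prod U (fun l' _ => hmeas (l', p₁ l'))).mul
            (Finset.measurable_prod U (fun l' _ => hmeas (l', p₂ l')))).aestronglyMeasurable ?_
        filter_upwards with ω
        rw [Real.norm_eq_abs, abs_mul, Finset.abs_prod, Finset.abs_prod]
        simp [habs, Finset.prod_const]
      · simp only [if_neg h₂, mul_zero]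
        exact integrable_zero _ _ _
    · simp only [if_neg h₁, zero_mul]
      exact integrable_zero _ _ _
  rw [integral_finset_sum _ (fun l _ => integrable_finset_sum _ (fun j _ => hint l j))]
  refine Finset.sum_eq_zero fun l _ => ?_
  rw [integral_finset_sum _ (fun j _ => hint l j)]
  refine Finset.sum_eq_zero fun j _ => ?_
  by_cases h₁ : p₁ l = j
  · by_cases h₂ : p₂ l = j
    · simp only [if_pos h₁, if_pos h₂]
      -- the interesting case
      have hll₀ : l ≠ l₀ := fun h => hl₀ (by rw [← h, h₁, h₂])
      set U := Finset.univ.erase l with hU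
      set D := U.filter (fun l' => ¬ p₁ l' = p₂ l') with hD
      set E := U.filter (fun l' => p₁ l' = p₂ l') with hE
      set S₁ := D.image (fun l' => (l', p₁ l')) with hS₁
      set S₂ := D.image (fun l' => (l', p₂ l')) with hS₂
      have hinj₁ : Set.InjOn (fun l' => ((l', p₁ l') : Fin d × W)) D := by
        intro a _ b _ h; exact (Prod.mk.injEq _ _ _ _ ▸ h).1
      have hinj₂ : Set.InjOn (fun l' => ((l', p₂ l') : Fin d × W)) D := by
        intro a _ b _ h; exact (Prod.mk.injEq _ _ _ _ ▸ h).1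
      have hdisj : Disjoint S₁ S₂ := by
        rw [Finset.disjoint_left]
        rintro t ht₁ ht₂
        obtain ⟨a, ha, rfl⟩ := Finset.mem_image.mp ht₁
        obtain ⟨b, hb, hab⟩ := Finset.mem_image.mp ht₂
        have h1 : b = a := (Prod.mk.injEq _ _ _ _ ▸ hab).1
        have h2 : p₂ b = p₁ a := (Prod.mk.injEq _ _ _ _ ▸ hab).2
        exact (Finset.mem_filter.mp ha).2 (by rw [← h2, h1])
      set S := S₁ ∪ S₂ with hS
      have hpoint : ∀ ω, (∏ l' ∈ U, Θ (l', p₁ l') ω) * (∏ l' ∈ U, Θ (l', p₂ l') ω)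
          = (σ ^ 2) ^ E.card * ∏ t ∈ S, Θ t ω := by
        intro ω
        rw [← Finset.prod_mul_distrib,
          ← Finset.prod_filter_mul_prod_filter_not U (fun l' => p₁ l' = p₂ l')
            (fun l' => Θ (l', p₁ l') ω * Θ (l', p₂ l') ω)]
        have hEprod : ∏ l' ∈ E, Θ (l', p₁ l') ω * Θ (l', p₂ l') ω = (σ ^ 2) ^ E.card := by
          rw [← Finset.prod_const]
          refine Finset.prod_congr rfl fun l' hl' => ?_
          have := (Finset.mem_filter.mp hl').2
          rw [this]
          rcases hval (l', p₂ l') ω with h | h <;> rw [h] <;> ring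
        have hDprod : ∏ l' ∈ D, Θ (l', p₁ l') ω * Θ (l', p₂ l') ω = ∏ t ∈ S, Θ t ω := by
          rw [Finset.prod_mul_distrib, hS, Finset.prod_union hdisj,
            Finset.prod_image (fun a ha b hb h => hinj₁ ha hb h),
            Finset.prod_image (fun a ha b hb h => hinj₂ ha hb h)]
        rw [hEprod, hDprod]
      have ht₀ : (l₀, p₁ l₀) ∈ S := by
        refine Finset.mem_union_left _ (Finset.mem_image.mpr ⟨l₀, ?_, rfl⟩)
        exact Finset.mem_filter.mpr ⟨Finset.mem_erase.mpr ⟨hll₀.symm, Finset.mem_univ _⟩, hl₀⟩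
      have hSprod : ∫ ω, ∏ t ∈ S, Θ t ω ∂μ = 0 := by
        have hsplit : ∀ ω, ∏ t ∈ S, Θ t ω
            = (∏ t ∈ S.erase (l₀, p₁ l₀), Θ t ω) * Θ (l₀, p₁ l₀) ω := by
          intro ω
          exact ((Finset.mul_prod_erase S (fun t => Θ t ω) ht₀).symm).trans (mul_comm _ _)
        have hIndep : IndepFun (∏ t ∈ S.erase (l₀, p₁ l₀), Θ t) (Θ (l₀, p₁ l₀)) μ :=
          hindep.indepFun_finsetProd_of_notMem hmeas (Finset.notMem_erase _ _)
        have hIndep' : IndepFun (fun ω => ∏ t ∈ S.erase (l₀, p₁ l₀), Θ t ω)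
            (Θ (l₀, p₁ l₀)) μ := by
          have : (∏ t ∈ S.erase (l₀, p₁ l₀), Θ t)
              = fun ω => ∏ t ∈ S.erase (l₀, p₁ l₀), Θ t ω := by
            funext ω; simp [Finset.prod_apply]
          rwa [this] at hIndep
        calc ∫ ω, ∏ t ∈ S, Θ t ω ∂μ
            = ∫ ω, (∏ t ∈ S.erase (l₀, p₁ l₀), Θ t ω) * Θ (l₀, p₁ l₀) ω ∂μ := by
              exact integral_congr_ae (Filter.Eventually.of_forall hsplit)
          _ = (∫ ω, ∏ t ∈ S.erase (l₀, p₁ l₀), Θ t ω ∂μ) * ∫ ω, Θ (l₀, p₁ l₀) ω ∂μ :=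
              hIndep'.integral_fun_mul_eq_mul_integral (hprodmeas _).aestronglyMeasurable
                (hmeas _).aestronglyMeasurable
          _ = 0 := by rw [hmean]; ring
      calc ∫ ω, (∏ l' ∈ U, Θ (l', p₁ l') ω) * (∏ l' ∈ U, Θ (l', p₂ l') ω) ∂μ
          = ∫ ω, (σ ^ 2) ^ E.card * ∏ t ∈ S, Θ t ω ∂μ :=
            integral_congr_ae (Filter.Eventually.of_forall hpoint)
        _ = (σ ^ 2) ^ E.card * ∫ ω, ∏ t ∈ S, Θ t ω ∂μ := integral_const_mul _ _
        _ = 0 := by rw [hSprod, mul_zero]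
    · simp [if_neg h₂]
  · simp [if_neg h₁]
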